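/- If h is a dimension function and liminf_n N^n h(κ R_n) = α, then the h-Hausdorff measure of C_{s,𝒟} satisfies ℋ^h(C_{s,𝒟}) ≤ α. -/

import Mathlib

open MeasureTheory
open scoped ENNReal

theorem stmt_6 (p N : ℕ) (hN : 0 < N)
    (s : ℕ → ℝ) (hs : ∀ n, 0 < s n) (hsum : Summable s)
    (d : ℕ → Fin N → EuclideanSpace ℝ (Fin p))
    (hzero : ∀ n, d n ⟨0, hN⟩ = 0)
    (κ : ℝ) (hκ : ∀ (n : ℕ) (i j : Fin N), i ≠ j → ‖d n i - d n j‖ ≤ κ)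
    (R : ℕ → ℝ) (hR : ∀ n, R n = ∑' i, s (n + i))
    (h : ℝ → ℝ) (hcont : Continuous h) (hmono : Monotone h) (h0 : h 0 = 0)
    (hnonneg : ∀ x, 0 ≤ h x)
    (α : ℝ≥0∞)
    (hα : Filter.atTop.liminf (fun n => (N : ℝ≥0∞) ^ n * ENNReal.ofReal (h (κ * R n))) = α) :
    Measure.mkMetric (fun r : ℝ≥0∞ => ENNReal.ofReal (h r.toReal))
        (Set.range fun σ : ℕ → Fin N => ∑' i, s i • d i (σ i)) ≤ α := by
  set κ' : ℝ := max κ 0 with hκ'def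
  have hκ'0 : 0 ≤ κ' := le_max_right _ _
  have hκ' : ∀ (n : ℕ) (i j : Fin N), ‖d n i - d n j‖ ≤ κ' := by
    intro n i j
    rcases eq_or_ne i j with rfl | hij
    · simp [hκ'0]
    · exact (hκ n i j hij).trans (le_max_left _ _)
  have hdnorm : ∀ (n : ℕ) (i : Fin N), ‖d n i‖ ≤ κ' := by
    intro n i
    have := hκ' n i ⟨0, hN⟩
    rwa [hzero, sub_zero] at this
  set F : (ℕ → Fin N) → EuclideanSpace ℝ (Fin p) := fun σ => ∑' i, s i • d i (σ i) with hF
  have hsummable : ∀ σ : ℕ → Fin N, Summable (fun i => s i • d i (σ i)) := by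
    intro σ
    apply Summable.of_norm_bounded (g := fun i => s i * κ') (hsum.mul_right κ')
    intro i
    rw [norm_smul, Real.norm_eq_abs, abs_of_pos (hs i)]
    exact mul_le_mul_of_nonneg_left (hdnorm i (σ i)) (hs i).le
  have hRnonneg : ∀ n, 0 ≤ R n := by
    intro n; rw [hR n]; exact tsum_nonneg fun i => (hs _).le
  -- key distance estimate
  have key : ∀ (n : ℕ) (σ τ : ℕ → Fin N), (∀ i, i < n → σ i = τ i) →
      ‖F σ - F τ‖ ≤ κ' * R n := by
    intro n σ τ hagree
    have hsub : F σ - F τ = ∑' i, (s i • d i (σ i) - s i • d i (τ i)) := by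
      rw [hF]
      exact (Summable.tsum_sub (hsummable σ) (hsummable τ)).symm
    set g : ℕ → EuclideanSpace ℝ (Fin p) := fun i => s i • d i (σ i) - s i • d i (τ i) with hg
    have hgsum : Summable g := (hsummable σ).sub (hsummable τ)
    have hgzero : ∀ i, i < n → g i = 0 := by
      intro i hi; simp [hg, hagree i hi]
    have hsplit : ∑' i, g i = ∑' i, g (i + n) := by
      rw [← Summable.sum_add_tsum_nat_add n hgsum]
      rw [Finset.sum_eq_zero fun i hi => hgzero i (Finset.mem_range.mp hi)]
      exact zero_add _
    have hnorm : ∀ i, ‖g (i + n)‖ ≤ κ' * s (n + i) := by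
      intro i
      have : g (i + n) = s (i + n) • (d (i + n) (σ (i + n)) - d (i + n) (τ (i + n))) := by
        simp [hg, smul_sub]
      rw [this, norm_smul, Real.norm_eq_abs, abs_of_pos (hs _), Nat.add_comm i n]
      rw [mul_comm]
      exact mul_le_mul_of_nonneg_right (hκ' _ _ _) (hs _).le
    have hsumnorm : Summable fun i => ‖g (i + n)‖ :=
      Summable.of_nonneg_of_le (fun i => norm_nonneg _) hnorm
        (((hsum.comp_injective (add_right_injective n)).mul_left κ'))
    calc ‖F σ - F τ‖ = ‖∑' i, g (i + n)‖ := by rw [hsub, hsplit]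
      _ ≤ ∑' i, ‖g (i + n)‖ := norm_tsum_le_tsum_norm hsumnorm
      _ ≤ ∑' i, κ' * s (n + i) :=
          Summable.tsum_le_tsum hnorm hsumnorm ((hsum.comp_injective (add_right_injective n)).mul_left κ')
      _ = κ' * R n := by rw [hR n, tsum_mul_left]
  -- cylinders
  set t : ∀ n : ℕ, (Fin n → Fin N) → Set (EuclideanSpace ℝ (Fin p)) :=
    fun n f => F '' {σ | ∀ i : Fin n, σ i = f i} with ht
  have hdiam : ∀ (n : ℕ) (f : Fin n → Fin N),
      EMetric.diam (t n f) ≤ ENNReal.ofReal (κ' * R n) := by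
    intro n f
    apply EMetric.diam_le
    rintro x ⟨σ, hσ, rfl⟩ y ⟨τ, hτ, rfl⟩
    rw [edist_dist]
    apply ENNReal.ofReal_le_ofReal
    rw [dist_eq_norm]
    exact key n σ τ (fun i hi => by rw [hσ ⟨i, hi⟩, hτ ⟨i, hi⟩])
  have hRtend : Filter.Tendsto R Filter.atTop (nhds 0) := by
    have h1 : Filter.Tendsto (fun n => ∑' i, s (i + n)) Filter.atTop (nhds 0) :=
      tendsto_sum_nat_add s
    refine h1.congr fun n => ?_
    rw [hR n]
    exact tsum_congr fun i => by rw [Nat.add_comm]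
  have hrtend : Filter.Tendsto (fun n => ENNReal.ofReal (κ' * R n)) Filter.atTop (nhds 0) := by
    have h1 : Filter.Tendsto (fun n => κ' * R n) Filter.atTop (nhds 0) := by
      simpa using hRtend.const_mul κ'
    have := (ENNReal.continuous_ofReal.tendsto 0).comp h1
    simpa [Function.comp_def] using this
  have hcover : ∀ n : ℕ, (Set.range F) ⊆ ⋃ f : Fin n → Fin N, t n f := by
    intro n x hx
    obtain ⟨σ, rfl⟩ := hx
    exact Set.mem_iUnion.mpr ⟨fun i => σ i, σ, fun i => rfl, rfl⟩
  have main := Measure.mkMetric_le_liminf_sum (Set.range F)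
    (fun n => ENNReal.ofReal (κ' * R n)) hrtend t
    (Filter.Eventually.of_forall fun n => hdiam n)
    (Filter.Eventually.of_forall hcover)
    (fun r : ℝ≥0∞ => ENNReal.ofReal (h r.toReal))
  refine main.trans ?_
  rw [← hα]
  refine Filter.liminf_le_liminf (Filter.Eventually.of_forall fun n => ?_)
  have hterm : ∀ f : Fin n → Fin N,
      ENNReal.ofReal (h (EMetric.diam (t n f)).toReal) ≤ ENNReal.ofReal (h (κ * R n)) := by
    intro f
    apply ENNReal.ofReal_le_ofReal
    have hd1 : (EMetric.diam (t n f)).toReal ≤ κ' * R n := by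
      have := hdiam n f
      have hfin : EMetric.diam (t n f) ≠ ⊤ := ne_top_of_le_ne_top ENNReal.ofReal_ne_top this
      calc (EMetric.diam (t n f)).toReal ≤ (ENNReal.ofReal (κ' * R n)).toReal :=
            ENNReal.toReal_mono ENNReal.ofReal_ne_top this
        _ = κ' * R n := ENNReal.toReal_ofReal (mul_nonneg hκ'0 (hRnonneg n))
    rcases le_or_gt 0 κ with hk | hk
    · have : κ' = κ := max_eq_left hk
      exact hmono (hd1.trans_eq (by rw [this]))
    · have : κ' = 0 := max_eq_right hk.le
      have h2 : (EMetric.diam (t n f)).toReal ≤ 0 := by rwa [this, zero_mul] at hd1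
      have h3 : h ((EMetric.diam (t n f)).toReal) ≤ h 0 := hmono h2
      rw [h0] at h3
      exact h3.trans (hnonneg _)
  calc ∑ f : Fin n → Fin N, ENNReal.ofReal (h (EMetric.diam (t n f)).toReal)
      ≤ ∑ _f : Fin n → Fin N, ENNReal.ofReal (h (κ * R n)) := Finset.sum_le_sum fun f _ => hterm f
    _ = (N : ℝ≥0∞) ^ n * ENNReal.ofReal (h (κ * R n)) := by
        rw [Finset.sum_const, Finset.card_univ, Fintype.card_fun, Fintype.card_fin,
          Fintype.card_fin, nsmul_eq_mul, Nat.cast_pow]
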